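/- Let L be a Lie conformal superalgebra that is finitely generated as an H-module, let P be a Poisson conformal superalgebra, and let τ : L → P be an injective parity-preserving H-module homomorphism with τ([a_λ b]) = [τ(a)_λ τ(b)] for all a, b ∈ L. Suppose that for every nonzero a ∈ L there exists b ∈ L with (τ(a)_λ τ(b)) ≠ 0. Then L has a finite faithful conformal representation. -/

import Mathlib

open Finsupp

noncomputable section

variable (k : Type) [Field k] [CharZero k]

section Base

variable {M N : Type} [AddCommGroup M] [Module k M] [AddCommGroup N] [Module k N]

/-- Multiplication by `λ` on `M[λ] := ℕ →₀ M`. -/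
def lamMul : (ℕ →₀ M) →ₗ[k] (ℕ →₀ M) := Finsupp.lmapDomain M k Nat.succ

/-- Apply a linear map to every coefficient of a polynomial. -/
def cw (f : M →ₗ[k] N) : (ℕ →₀ M) →ₗ[k] (ℕ →₀ N) := Finsupp.mapRange.linearMap f

/-- The constant-polynomial embedding `M → M[λ]`. -/
def cst : M →ₗ[k] (ℕ →₀ M) := Finsupp.lsingle 0

/-- Multiplication by `λ` on `M[λ,μ] := ℕ →₀ (ℕ →₀ M)` (outer variable `μ`, inner `λ`). -/
def lamMul2 : (ℕ →₀ (ℕ →₀ M)) →ₗ[k] (ℕ →₀ (ℕ →₀ M)) := cw k (lamMul k)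

/-- Multiplication by `μ` on `M[λ,μ]`. -/
def muMul2 : (ℕ →₀ (ℕ →₀ M)) →ₗ[k] (ℕ →₀ (ℕ →₀ M)) := Finsupp.lmapDomain (ℕ →₀ M) k Nat.succ

/-- The constant embedding `M → M[λ,μ]`. -/
def cst2 : M →ₗ[k] (ℕ →₀ (ℕ →₀ M)) := (cst k).comp (cst k)

/-- Interchange of the two variables of `M[λ,μ]`. -/
def swapVar : (ℕ →₀ (ℕ →₀ M)) →ₗ[k] (ℕ →₀ (ℕ →₀ M)) :=
  Finsupp.lsum k fun n => cw k (Finsupp.lsingle n)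

/-- The substitution `λ ↦ -∂-λ` on `M[λ]`, where `∂` acts on `M` via `D`. -/
def substNeg (D : M →ₗ[k] M) : (ℕ →₀ M) →ₗ[k] (ℕ →₀ M) :=
  Finsupp.lsum k fun n => ((-(cw k D) - lamMul k) ^ n) ∘ₗ cst k

/-- The substitution `ν ↦ λ+μ` from `M[ν]` to `M[λ,μ]`. -/
def substAdd : (ℕ →₀ M) →ₗ[k] (ℕ →₀ (ℕ →₀ M)) :=
  Finsupp.lsum k fun n => ((lamMul2 k + muMul2 k) ^ n) ∘ₗ cst2 k

end Base
section Ops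

variable {A B C V W L P : Type} [AddCommGroup A] [Module k A] [AddCommGroup B] [Module k B]
  [AddCommGroup C] [Module k C] [AddCommGroup V] [Module k V] [AddCommGroup W] [Module k W]
  [AddCommGroup L] [Module k L] [AddCommGroup P] [Module k P]

/-- `P_λ(a, Q_μ(b, c))`, an element of `W[λ,μ]` (outer variable `μ`, inner `λ`). -/
def opComp (F : A →ₗ[k] C →ₗ[k] (ℕ →₀ W)) (G : B →ₗ[k] V →ₗ[k] (ℕ →₀ C))
    (a : A) (b : B) (c : V) : ℕ →₀ (ℕ →₀ W) := cw k (F a) (G b c)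

/-- `Q_μ(b, P_λ(a, c))`, an element of `W[λ,μ]` (outer variable `μ`, inner `λ`). -/
def opCompSwap (F : B →ₗ[k] C →ₗ[k] (ℕ →₀ W)) (G : A →ₗ[k] V →ₗ[k] (ℕ →₀ C))
    (b : B) (a : A) (c : V) : ℕ →₀ (ℕ →₀ W) := swapVar k (cw k (F b) (G a c))

/-- `Q_{λ+μ}(P_λ(a, b), c)`, an element of `W[λ,μ]` (outer variable `μ`, inner `λ`). -/
def opSubst (F : A →ₗ[k] B →ₗ[k] (ℕ →₀ C)) (G : C →ₗ[k] V →ₗ[k] (ℕ →₀ W))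
    (a : A) (b : B) (c : V) : ℕ →₀ (ℕ →₀ W) :=
  Finsupp.lsum k (fun n => ((lamMul2 k (M := W)) ^ n) ∘ₗ substAdd k) (cw k (G.flip c) (F a b))

end Ops

/-- The Koszul sign `(-1)^{|a||b|}` attached to parities `i`, `j`. -/
def sgn (i j : ZMod 2) : ℤ := if i = 1 ∧ j = 1 then -1 else 1

section Structures

variable {A B C L V P : Type} [AddCommGroup A] [Module k A] [AddCommGroup B] [Module k B]
  [AddCommGroup C] [Module k C]
  [AddCommGroup L] [Module k L] [AddCommGroup V] [Module k V] [AddCommGroup P] [Module k P]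

/-- A `ℤ₂`-graded module over `H = k[∂]`, where `∂` acts via `D`:
the two graded components are complementary and `∂`-invariant. -/
structure IsGradedHMod (D : L →ₗ[k] L) (par : ZMod 2 → Submodule k L) : Prop where
  sup_eq_top : par 0 ⊔ par 1 = ⊤
  inf_eq_bot : par 0 ⊓ par 1 = ⊥
  map_d : ∀ i a, a ∈ par i → D a ∈ par i

/-- Sesqui-linearity of a pairing `A ⊗ B → C[λ]` with respect to the `∂`-actions
`DA`, `DB`, `DC`: `F(∂a, b) = -λ F(a,b)` and `F(a, ∂b) = (∂+λ) F(a,b)`. -/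
structure IsSesqui (DA : A →ₗ[k] A) (DB : B →ₗ[k] B) (DC : C →ₗ[k] C)
    (F : A →ₗ[k] B →ₗ[k] (ℕ →₀ C)) : Prop where
  dleft : ∀ a b, F (DA a) b = -(lamMul k (F a b))
  dright : ∀ a b, F a (DB b) = cw k DC (F a b) + lamMul k (F a b)

/-- A Lie conformal superalgebra structure on the `H`-module `L` (with `∂` acting via `D`)
with `ℤ₂`-grading `par` and `λ`-bracket `Br`. -/
structure IsLieConfSuper (D : L →ₗ[k] L) (par : ZMod 2 → Submodule k L)
    (Br : L →ₗ[k] L →ₗ[k] (ℕ →₀ L)) : Prop where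
  graded : IsGradedHMod k D par
  sesqui : IsSesqui k D D D Br
  parity : ∀ i j a b, a ∈ par i → b ∈ par j → ∀ n, Br a b n ∈ par (i + j)
  skew : ∀ i j a b, a ∈ par i → b ∈ par j → Br a b = -(sgn i j • substNeg k D (Br b a))
  jacobi : ∀ i j a b c, a ∈ par i → b ∈ par j →
    opComp k Br Br a b c = opSubst k Br Br a b c + sgn i j • opCompSwap k Br Br b a c

/-- A Poisson conformal superalgebra structure on the `H`-module `P`, with `λ`-bracket `Br`
and conformally associative, supercommutative product `Ml`, linked by the conformal
Leibniz rule. -/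
structure IsPoissonConfSuper (D : P →ₗ[k] P) (par : ZMod 2 → Submodule k P)
    (Br Ml : P →ₗ[k] P →ₗ[k] (ℕ →₀ P)) : Prop where
  lie : IsLieConfSuper k D par Br
  mul_sesqui : IsSesqui k D D D Ml
  mul_parity : ∀ i j a b, a ∈ par i → b ∈ par j → ∀ n, Ml a b n ∈ par (i + j)
  assoc : ∀ a b c, opComp k Ml Ml a b c = opSubst k Ml Ml a b c
  comm : ∀ i j a b, a ∈ par i → b ∈ par j → Ml a b = sgn i j • substNeg k D (Ml b a)
  leibniz : ∀ i j a b c, a ∈ par i → b ∈ par j →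
    opComp k Br Ml a b c = opSubst k Br Ml a b c + sgn i j • opCompSwap k Ml Br b a c

/-- A conformal representation of the Lie conformal superalgebra `(L, D, par, Br)` on the
`ℤ₂`-graded `H`-module `(V, DV, parV)`. -/
structure IsConfRep (D : L →ₗ[k] L) (par : ZMod 2 → Submodule k L)
    (Br : L →ₗ[k] L →ₗ[k] (ℕ →₀ L)) (DV : V →ₗ[k] V) (parV : ZMod 2 → Submodule k V)
    (ρ : L →ₗ[k] V →ₗ[k] (ℕ →₀ V)) : Prop where
  sesqui : IsSesqui k D DV DV ρ
  parity : ∀ i j a x, a ∈ par i → x ∈ parV j → ∀ n, ρ a x n ∈ parV (i + j)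
  jacobi : ∀ i j a b x, a ∈ par i → b ∈ par j →
    opComp k ρ ρ a b x - sgn i j • opCompSwap k ρ ρ b a x = opSubst k Br ρ a b x

/-- Finiteness of an `H`-module: it is generated, as a `k[∂]`-module, by finitely
many elements. -/
def IsHFinite (DV : V →ₗ[k] V) : Prop :=
  ∃ s : Finset V, ∀ W : Submodule k V, (∀ x ∈ W, DV x ∈ W) → (↑s : Set V) ⊆ ↑W → W = ⊤

/-- The Lie conformal superalgebra `(L, D, par, Br)` admits a finite faithful conformal
representation. -/
def HasFFR (D : L →ₗ[k] L) (par : ZMod 2 → Submodule k L)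
    (Br : L →ₗ[k] L →ₗ[k] (ℕ →₀ L)) : Prop :=
  ∃ (V : Type) (_ : AddCommGroup V) (_ : Module k V) (DV : V →ₗ[k] V)
    (parV : ZMod 2 → Submodule k V) (ρ : L →ₗ[k] V →ₗ[k] (ℕ →₀ V)),
    IsGradedHMod k DV parV ∧ IsConfRep k D par Br DV parV ρ ∧ IsHFinite k DV ∧
      ∀ a : L, a ≠ 0 → ρ a ≠ 0

/-- `ρ` (defined on the ambient space `P`) restricts to a conformal representation of the
Lie conformal subalgebra `L ≤ P` (with ambient `λ`-bracket `Br`) on `(V, DV, parV)`. -/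
def IsConfRepOn (D : P →ₗ[k] P) (par : ZMod 2 → Submodule k P)
    (Br : P →ₗ[k] P →ₗ[k] (ℕ →₀ P)) (L : Submodule k P)
    (DV : V →ₗ[k] V) (parV : ZMod 2 → Submodule k V)
    (ρ : P →ₗ[k] V →ₗ[k] (ℕ →₀ V)) : Prop :=
  (∀ a ∈ L, ∀ x, ρ (D a) x = -(lamMul k (ρ a x))) ∧
  (∀ a ∈ L, ∀ x, ρ a (DV x) = cw k DV (ρ a x) + lamMul k (ρ a x)) ∧
  (∀ i j, ∀ a ∈ L ⊓ par i, ∀ x ∈ parV j, ∀ n, ρ a x n ∈ parV (i + j)) ∧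
  (∀ i j, ∀ a ∈ L ⊓ par i, ∀ b ∈ L ⊓ par j, ∀ x,
    opComp k ρ ρ a b x - sgn i j • opCompSwap k ρ ρ b a x = opSubst k Br ρ a b x)

end Structures
section Extension

variable {A B W V : Type} [AddCommGroup A] [Module k A] [AddCommGroup B] [Module k B]
  [AddCommGroup W] [Module k W] [AddCommGroup V] [Module k V]

/-- The sesqui-linear extension of a pairing `F : A ⊗ B → W[λ]` to a pairing
`(H ⊗ A) ⊗ (H ⊗ B) → W[λ]` (where `H ⊗ A` is realized as `ℕ →₀ A`, the index recording
the power of `∂`): `F(∂^n a, ∂^m b) = (-λ)^n (∂+λ)^m F(a, b)`, where `∂` acts on `W[λ]`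
coefficientwise via `DW`. -/
def extSesqui (DW : W →ₗ[k] W) (F : A →ₗ[k] B →ₗ[k] (ℕ →₀ W)) :
    (ℕ →₀ A) →ₗ[k] (ℕ →₀ B) →ₗ[k] (ℕ →₀ W) :=
  Finsupp.lsum k fun n =>
    (Finsupp.lsum (R := k) k).toLinearMap.comp <| LinearMap.pi fun m =>
      (LinearMap.llcomp k B (ℕ →₀ W) (ℕ →₀ W)
        (((-(lamMul k (M := W))) ^ n) * ((cw k DW + lamMul k) ^ m))).comp F

/-- The action of `∂` on `H ⊗ V`, realized as `ℕ →₀ V`. -/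
def DD (V : Type) [AddCommGroup V] [Module k V] : (ℕ →₀ V) →ₗ[k] (ℕ →₀ V) :=
  Finsupp.lmapDomain V k Nat.succ

/-- The canonical embedding `V → H ⊗ V`. -/
def emb (V : Type) [AddCommGroup V] [Module k V] : V →ₗ[k] (ℕ →₀ V) :=
  Finsupp.lsingle 0

/-- A grading of `V` lifts coefficientwise to a grading of `H ⊗ V = ℕ →₀ V`. -/
def liftPar {V : Type} [AddCommGroup V] [Module k V] (par : ZMod 2 → Submodule k V)
    (i : ZMod 2) : Submodule k (ℕ →₀ V) where
  carrier := { f | ∀ n, f n ∈ par i }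
  add_mem' := fun hf hg n => by
    simpa only [Finsupp.add_apply] using add_mem (hf n) (hg n)
  zero_mem' := fun n => by simp
  smul_mem' := fun c f hf n => by
    simpa only [Finsupp.smul_apply] using Submodule.smul_mem _ c (hf n)

end Extension

section Super

variable (p : Type) [NonUnitalRing p] [Module k p] [SMulCommClass k p p] [IsScalarTower k p p]

/-- An (ordinary) Poisson superalgebra structure on the `ℤ₂`-graded associative
supercommutative algebra `p`, with super Lie bracket `br`. -/
structure IsPoissonSuper (par : ZMod 2 → Submodule k p) (br : p →ₗ[k] p →ₗ[k] p) : Prop where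
  sup_eq_top : par 0 ⊔ par 1 = ⊤
  inf_eq_bot : par 0 ⊓ par 1 = ⊥
  mul_mem : ∀ i j (a b : p), a ∈ par i → b ∈ par j → a * b ∈ par (i + j)
  mul_scomm : ∀ i j (a b : p), a ∈ par i → b ∈ par j → a * b = sgn i j • (b * a)
  br_mem : ∀ i j a b, a ∈ par i → b ∈ par j → br a b ∈ par (i + j)
  br_skew : ∀ i j a b, a ∈ par i → b ∈ par j → br a b = -(sgn i j • br b a)
  br_jacobi : ∀ i j a b c, a ∈ par i → b ∈ par j →
    br a (br b c) = br (br a b) c + sgn i j • br b (br a c)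
  leibniz : ∀ i j a b c, a ∈ par i → b ∈ par j →
    br a (b * c) = br a b * c + sgn i j • (b * br a c)

/-- An even derivation of the Poisson superalgebra `(p, par, br)`. -/
structure IsEvenDerivation (par : ZMod 2 → Submodule k p) (br : p →ₗ[k] p →ₗ[k] p)
    (d : p →ₗ[k] p) : Prop where
  even : ∀ i a, a ∈ par i → d a ∈ par i
  map_mul : ∀ a b, d (a * b) = d a * b + a * d b
  map_br : ∀ a b, d (br a b) = br (d a) b + br a (d b)

/-- Base pairing `a ⊗ b ↦ a b` (constant in `λ`) for the current/quadratic constructions. -/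
def curMul0 : p →ₗ[k] p →ₗ[k] (ℕ →₀ (ℕ →₀ p)) :=
  (LinearMap.mul k p).compr₂ ((cst k).comp (emb k p))

/-- Base pairing `a ⊗ b ↦ {a, b}` (constant in `λ`) for the current construction. -/
def curBr0 (br : p →ₗ[k] p →ₗ[k] p) : p →ₗ[k] p →ₗ[k] (ℕ →₀ (ℕ →₀ p)) :=
  br.compr₂ ((cst k).comp (emb k p))

/-- Base pairing `a ⊗ b ↦ {a, b} + ∂ (d a · b) + λ d(a b)` of the Poisson conformal
superalgebra `L(p, d)`. -/
def qua0 (br : p →ₗ[k] p →ₗ[k] p) (d : p →ₗ[k] p) : p →ₗ[k] p →ₗ[k] (ℕ →₀ (ℕ →₀ p)) :=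
  br.compr₂ ((cst k).comp (emb k p))
    + ((LinearMap.mul k p).comp d).compr₂ ((cst k).comp ((DD k p).comp (emb k p)))
    + ((LinearMap.mul k p).compr₂ d).compr₂ ((lamMul k).comp ((cst k).comp (emb k p)))

/-- The multiplication `(a ∂^n)_λ (b ∂^m) = (-λ)^n (∂+λ)^m (a b)` on `H ⊗ p`. -/
def LpdMul : (ℕ →₀ p) →ₗ[k] (ℕ →₀ p) →ₗ[k] (ℕ →₀ (ℕ →₀ p)) :=
  extSesqui k (DD k p) (curMul0 k p)

/-- The `λ`-bracket of the current Poisson conformal superalgebra `Cur p`. -/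
def CurBr (br : p →ₗ[k] p →ₗ[k] p) : (ℕ →₀ p) →ₗ[k] (ℕ →₀ p) →ₗ[k] (ℕ →₀ (ℕ →₀ p)) :=
  extSesqui k (DD k p) (curBr0 k p br)

/-- The `λ`-bracket of the Poisson conformal superalgebra `L(p, d)`. -/
def LpdBr (br : p →ₗ[k] p →ₗ[k] p) (d : p →ₗ[k] p) :
    (ℕ →₀ p) →ₗ[k] (ℕ →₀ p) →ₗ[k] (ℕ →₀ (ℕ →₀ p)) :=
  extSesqui k (DD k p) (qua0 k p br d)

/-- The twisted action `ρ̂_λ(a, u) = [a_λ u] + λ (a_λ u)` on `L(p, d)`. -/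
def LpdRho (br : p →ₗ[k] p →ₗ[k] p) (d : p →ₗ[k] p) :
    (ℕ →₀ p) →ₗ[k] (ℕ →₀ p) →ₗ[k] (ℕ →₀ (ℕ →₀ p)) :=
  LpdBr k p br d + (LpdMul k p).compr₂ (lamMul k)

end Super


set_option linter.unusedSectionVars false

section Infra

variable {k : Type} [Field k] [CharZero k]
variable {M N Q R : Type} [AddCommGroup M] [Module k M] [AddCommGroup N] [Module k N]
  [AddCommGroup Q] [Module k Q] [AddCommGroup R] [Module k R]

lemma cw_apply (f : M →ₗ[k] N) (g : ℕ →₀ M) (n : ℕ) : cw k f g n = f (g n) := by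
  simp [cw]

lemma lamMul_apply_zero (g : ℕ →₀ M) : lamMul k g 0 = 0 := by
  classical
  simpa [lamMul] using Finsupp.mapDomain_notin_range g 0 (by simp [Set.range, Nat.succ_ne_zero])

lemma lamMul_apply_succ (g : ℕ →₀ M) (n : ℕ) : lamMul k g (n + 1) = g n := by
  classical
  simpa [lamMul] using Finsupp.mapDomain_apply Nat.succ_injective g n

lemma lamMul_single (n : ℕ) (a : M) : lamMul k (single n a) = single (n + 1) a := by
  classical
  simp [lamMul, Finsupp.mapDomain_single]

lemma cw_single (f : M →ₗ[k] N) (n : ℕ) (a : M) : cw k f (single n a) = single n (f a) := by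
  classical
  simp [cw]

lemma cst_apply (a : M) : cst k a = single 0 a := rfl

lemma muMul2_eq_lamMul : muMul2 k (M := M) = lamMul k (M := ℕ →₀ M) := rfl

lemma swapVar_single (m : ℕ) (g : ℕ →₀ M) :
    swapVar k (single m g) = cw k (Finsupp.lsingle m) g := by
  simp [swapVar]

lemma swapVar_single_single (m n : ℕ) (a : M) :
    swapVar k (single m (single n a)) = single n (single m a) := by
  classical
  simp [swapVar_single, cw_single]

lemma substAdd_single (n : ℕ) (a : M) :
    substAdd k (single n a) = (((lamMul2 k + muMul2 k) : (ℕ →₀ (ℕ →₀ M)) →ₗ[k] _) ^ n) (cst2 k a) := by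
  simp [substAdd]

lemma substNeg_single (D : M →ₗ[k] M) (n : ℕ) (a : M) :
    substNeg k D (single n a) = (((-(cw k D) - lamMul k) : (ℕ →₀ M) →ₗ[k] _) ^ n) (single 0 a) := by
  simp [substNeg, cst_apply]

lemma cw_comp (f : N →ₗ[k] Q) (g : M →ₗ[k] N) :
    cw k (f ∘ₗ g) = cw k f ∘ₗ cw k g := by
  apply Finsupp.lhom_ext
  intro n a
  simp [cw_single]

lemma cw_id : cw k (LinearMap.id : M →ₗ[k] M) = LinearMap.id := by
  apply Finsupp.lhom_ext
  intro n a
  simp [cw_single]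

lemma cw_add (f g : M →ₗ[k] N) : cw k (f + g) = cw k f + cw k g := by
  apply Finsupp.lhom_ext
  intro n a
  simp [cw_single, Finsupp.single_add]

lemma cw_lamMul (f : M →ₗ[k] N) : cw k f ∘ₗ lamMul k = lamMul k ∘ₗ cw k f := by
  apply Finsupp.lhom_ext
  intro n a
  simp [cw_single, lamMul_single]

lemma comp_pow_comm {M' N' : Type} [AddCommGroup M'] [Module k M'] [AddCommGroup N']
    [Module k N'] {T : M' →ₗ[k] M'} {T' : N' →ₗ[k] N'} {S : M' →ₗ[k] N'}
    (h : S ∘ₗ T = T' ∘ₗ S) (n : ℕ) : S ∘ₗ (T ^ n) = (T' ^ n) ∘ₗ S := by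
  induction n with
  | zero =>
      rw [pow_zero, pow_zero]
      refine LinearMap.ext fun x => rfl
  | succ n ih =>
      refine LinearMap.ext fun x => ?_
      have hx := LinearMap.congr_fun ih (T x)
      have hy := LinearMap.congr_fun h x
      simp only [LinearMap.comp_apply] at hx hy ⊢
      have e1 : (T ^ (n + 1)) x = (T ^ n) (T x) := by rw [pow_succ, Module.End.mul_apply]
      have e2 : (T' ^ (n + 1)) (S x) = (T' ^ n) (T' (S x)) := by
        rw [pow_succ, Module.End.mul_apply]
      rw [e1, hx, hy, e2]

lemma comp_pow_comm_apply {M' N' : Type} [AddCommGroup M'] [Module k M'] [AddCommGroup N']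
    [Module k N'] {T : M' →ₗ[k] M'} {T' : N' →ₗ[k] N'} {S : M' →ₗ[k] N'}
    (h : S ∘ₗ T = T' ∘ₗ S) (n : ℕ) (x : M') : S ((T ^ n) x) = (T' ^ n) (S x) := by
  simpa using LinearMap.congr_fun (comp_pow_comm h n) x

lemma cw2_lamMul2 (f : M →ₗ[k] N) :
    cw k (cw k f) ∘ₗ lamMul2 k = lamMul2 k ∘ₗ cw k (cw k f) := by
  rw [lamMul2, lamMul2, ← cw_comp, cw_lamMul, cw_comp]

lemma cw2_muMul2 (f : M →ₗ[k] N) :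
    cw k (cw k f) ∘ₗ muMul2 k = muMul2 k ∘ₗ cw k (cw k f) :=
  cw_lamMul (cw k f)

lemma cw2_swapVar (f : M →ₗ[k] N) :
    cw k (cw k f) ∘ₗ swapVar k = swapVar k ∘ₗ cw k (cw k f) := by
  apply Finsupp.lhom_ext
  intro m g
  induction g using Finsupp.induction_linear with
  | zero => simp only [Finsupp.single_zero, map_zero]
  | add u v hu hv =>
      have : (single m (u + v) : ℕ →₀ (ℕ →₀ M)) = single m u + single m v := by
        simp [Finsupp.single_add]
      simp only [this, map_add] at *
      rw [hu, hv]
  | single n a =>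
      simp [swapVar_single_single, cw_single]

lemma cw2_lamMul2_add_muMul2 (f : M →ₗ[k] N) :
    cw k (cw k f) ∘ₗ (lamMul2 k + muMul2 k) = (lamMul2 k + muMul2 k) ∘ₗ cw k (cw k f) := by
  refine LinearMap.ext fun x => ?_
  have h1 := LinearMap.congr_fun (cw2_lamMul2 (k := k) f) x
  have h2 := LinearMap.congr_fun (cw2_muMul2 (k := k) f) x
  simp only [LinearMap.comp_apply, LinearMap.add_apply, map_add] at *
  rw [h1, h2]

lemma cw_cst2 (f : M →ₗ[k] N) (a : M) : cw k (cw k f) (cst2 k a) = cst2 k (f a) := by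
  simp [cst2, cst_apply, cw_single]

lemma cw2_substAdd (f : M →ₗ[k] N) :
    cw k (cw k f) ∘ₗ substAdd k = substAdd k ∘ₗ cw k f := by
  apply Finsupp.lhom_ext
  intro n a
  simp only [LinearMap.comp_apply, cw_single, substAdd_single]
  rw [← LinearMap.comp_apply (cw k (cw k f)), comp_pow_comm (cw2_lamMul2_add_muMul2 f) n]
  simp [cw_cst2]

lemma cw_substNeg {D : M →ₗ[k] M} {D' : N →ₗ[k] N} (f : M →ₗ[k] N)
    (h : f ∘ₗ D = D' ∘ₗ f) :
    cw k f ∘ₗ substNeg k D = substNeg k D' ∘ₗ cw k f := by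
  have hc : cw k f ∘ₗ (-(cw k D) - lamMul k) = (-(cw k D') - lamMul k) ∘ₗ cw k f := by
    have : cw k f ∘ₗ cw k D = cw k D' ∘ₗ cw k f := by
      rw [← cw_comp, h, cw_comp]
    refine LinearMap.ext fun x => ?_
    simp only [LinearMap.comp_apply, LinearMap.sub_apply, LinearMap.neg_apply, map_sub, map_neg]
    rw [← LinearMap.comp_apply (cw k f), this, ← LinearMap.comp_apply (cw k f) (lamMul k),
      cw_lamMul]
    rfl
  apply Finsupp.lhom_ext
  intro n a
  simp only [LinearMap.comp_apply, cw_single, substNeg_single]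
  rw [← LinearMap.comp_apply (cw k f), comp_pow_comm hc n]
  simp [cw_single]

end Infra


section Infra2

variable {k : Type} [Field k] [CharZero k]
variable {M N Q R : Type} [AddCommGroup M] [Module k M] [AddCommGroup N] [Module k N]
  [AddCommGroup Q] [Module k Q] [AddCommGroup R] [Module k R]

lemma lamMul2_single (m : ℕ) (g : ℕ →₀ M) :
    lamMul2 k (single m g) = single m (lamMul k g) := by
  simp [lamMul2, cw_single]

lemma muMul2_single (m : ℕ) (g : ℕ →₀ M) :
    muMul2 k (single m g) = single (m + 1) g := by
  rw [muMul2_eq_lamMul, lamMul_single]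

lemma swap_lamMul2 : swapVar k ∘ₗ lamMul2 k = muMul2 k (M := M) ∘ₗ swapVar k := by
  apply Finsupp.lhom_ext
  intro m g
  induction g using Finsupp.induction_linear with
  | zero => simp only [Finsupp.single_zero, map_zero]
  | add u v hu hv =>
      have : (single m (u + v) : ℕ →₀ (ℕ →₀ M)) = single m u + single m v := by
        simp [Finsupp.single_add]
      simp only [this, map_add] at *
      rw [hu, hv]
  | single n a =>
      simp [lamMul2_single, lamMul_single, swapVar_single_single, muMul2_single]

lemma swap_muMul2 : swapVar k ∘ₗ muMul2 k = lamMul2 k (M := M) ∘ₗ swapVar k := by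
  apply Finsupp.lhom_ext
  intro m g
  induction g using Finsupp.induction_linear with
  | zero => simp only [Finsupp.single_zero, map_zero]
  | add u v hu hv =>
      have : (single m (u + v) : ℕ →₀ (ℕ →₀ M)) = single m u + single m v := by
        simp [Finsupp.single_add]
      simp only [this, map_add] at *
      rw [hu, hv]
  | single n a =>
      simp [muMul2_single, swapVar_single_single, lamMul2_single, lamMul_single]

lemma swap_swap : swapVar k ∘ₗ swapVar k = (LinearMap.id : (ℕ →₀ (ℕ →₀ M)) →ₗ[k] _) := by
  apply Finsupp.lhom_ext
  intro m g
  induction g using Finsupp.induction_linear with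
  | zero => simp only [Finsupp.single_zero, map_zero]
  | add u v hu hv =>
      have : (single m (u + v) : ℕ →₀ (ℕ →₀ M)) = single m u + single m v := by
        simp [Finsupp.single_add]
      simp only [this, map_add] at *
      rw [hu, hv]
  | single n a =>
      simp [swapVar_single_single]

lemma swap_swap_apply (h : ℕ →₀ (ℕ →₀ M)) : swapVar k (swapVar k h) = h :=
  LinearMap.congr_fun (swap_swap (k := k)) h

lemma swap_LM : swapVar k ∘ₗ (lamMul2 k + muMul2 k) =
    (lamMul2 k + muMul2 k (M := M)) ∘ₗ swapVar k := by
  refine LinearMap.ext fun x => ?_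
  have h1 := LinearMap.congr_fun (swap_lamMul2 (k := k) (M := M)) x
  have h2 := LinearMap.congr_fun (swap_muMul2 (k := k) (M := M)) x
  simp only [LinearMap.comp_apply, LinearMap.add_apply, map_add] at *
  rw [h1, h2, add_comm]

lemma swap_cst2 (a : M) : swapVar k (cst2 k a) = cst2 k a := by
  simp [cst2, cst_apply, swapVar_single_single]

lemma swap_substAdd : swapVar k ∘ₗ substAdd k = substAdd k (M := M) := by
  apply Finsupp.lhom_ext
  intro n a
  simp only [LinearMap.comp_apply, substAdd_single]
  rw [← LinearMap.comp_apply (swapVar k), comp_pow_comm (swap_LM) n]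
  simp [swap_cst2]

lemma substAdd_lamMul :
    substAdd k ∘ₗ lamMul k = (lamMul2 k + muMul2 k (M := M)) ∘ₗ substAdd k := by
  apply Finsupp.lhom_ext
  intro n a
  simp only [LinearMap.comp_apply, lamMul_single, substAdd_single]
  rw [pow_succ']
  rfl

lemma LM_comm : lamMul2 k ∘ₗ muMul2 k = muMul2 k (M := M) ∘ₗ lamMul2 k :=
  cw_lamMul (lamMul k)

lemma lamMul2_LM_comm : lamMul2 k ∘ₗ (lamMul2 k + muMul2 k) =
    (lamMul2 k + muMul2 k (M := M)) ∘ₗ lamMul2 k := by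
  refine LinearMap.ext fun x => ?_
  have h1 := LinearMap.congr_fun (LM_comm (k := k) (M := M)) x
  simp only [LinearMap.comp_apply, LinearMap.add_apply, map_add] at *
  rw [h1]

/-- The substitution operator `g(ν) ↦ F_{λ+μ}(g)(ν ↦ λ)`. -/
def SubstOp (F : M →ₗ[k] (ℕ →₀ N)) : (ℕ →₀ M) →ₗ[k] (ℕ →₀ (ℕ →₀ N)) :=
  (Finsupp.lsum k fun n => ((lamMul2 k) ^ n) ∘ₗ substAdd k) ∘ₗ cw k F

lemma opSubst_eq {A B C V W : Type} [AddCommGroup A] [Module k A] [AddCommGroup B] [Module k B]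
    [AddCommGroup C] [Module k C] [AddCommGroup V] [Module k V] [AddCommGroup W] [Module k W]
    (F : A →ₗ[k] B →ₗ[k] (ℕ →₀ C)) (G : C →ₗ[k] V →ₗ[k] (ℕ →₀ W))
    (a : A) (b : B) (c : V) : opSubst k F G a b c = SubstOp (G.flip c) (F a b) := rfl

lemma SubstOp_single (F : M →ₗ[k] (ℕ →₀ N)) (n : ℕ) (p : M) :
    SubstOp F (single n p) = ((lamMul2 k : (ℕ →₀ (ℕ →₀ N)) →ₗ[k] _) ^ n) (substAdd k (F p)) := by
  simp [SubstOp, cw_single]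

lemma SubstOp_lamMul (F : M →ₗ[k] (ℕ →₀ N)) :
    SubstOp F ∘ₗ lamMul k = lamMul2 k ∘ₗ SubstOp F := by
  apply Finsupp.lhom_ext
  intro n p
  simp only [LinearMap.comp_apply, lamMul_single, SubstOp_single]
  rw [pow_succ']
  rfl

lemma SubstOp_cwD {D : M →ₗ[k] M} (F : M →ₗ[k] (ℕ →₀ N))
    (h : F ∘ₗ D = -(lamMul k ∘ₗ F)) :
    SubstOp F ∘ₗ cw k D = -((lamMul2 k + muMul2 k) ∘ₗ SubstOp F) := by
  apply Finsupp.lhom_ext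
  intro n p
  have hD : F (D p) = -(lamMul k (F p)) := by
    have := LinearMap.congr_fun h p
    simpa using this
  simp only [LinearMap.comp_apply, cw_single, SubstOp_single, LinearMap.neg_apply,
    LinearMap.add_apply]
  rw [hD, map_neg, map_neg]
  have h1 := LinearMap.congr_fun (substAdd_lamMul (k := k) (M := N)) (F p)
  simp only [LinearMap.comp_apply, LinearMap.add_apply] at h1
  rw [h1]
  have c1 : (lamMul2 k) ((lamMul2 k ^ n) (substAdd k (F p)))
      = (lamMul2 k ^ n) ((lamMul2 k) (substAdd k (F p))) := comp_pow_comm_apply rfl n _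
  have c2 : (muMul2 k) ((lamMul2 k ^ n) (substAdd k (F p)))
      = (lamMul2 k ^ n) ((muMul2 k) (substAdd k (F p))) :=
    comp_pow_comm_apply (LM_comm (k := k)).symm n _
  simp only [LinearMap.add_apply, map_add]
  rw [c1, c2]

lemma SubstOp_negD {D : M →ₗ[k] M} (F : M →ₗ[k] (ℕ →₀ N))
    (h : F ∘ₗ D = -(lamMul k ∘ₗ F)) :
    SubstOp F ∘ₗ (-(cw k D) - lamMul k) = muMul2 k ∘ₗ SubstOp F := by
  refine LinearMap.ext fun x => ?_
  have h1 := LinearMap.congr_fun (SubstOp_cwD F h) x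
  have h2 := LinearMap.congr_fun (SubstOp_lamMul (k := k) F) x
  simp only [LinearMap.comp_apply, LinearMap.sub_apply, LinearMap.neg_apply, map_sub, map_neg,
    LinearMap.add_apply] at *
  rw [h1, h2]
  abel

lemma SubstOp_substNeg {D : M →ₗ[k] M} (F : M →ₗ[k] (ℕ →₀ N))
    (h : F ∘ₗ D = -(lamMul k ∘ₗ F)) :
    SubstOp F ∘ₗ substNeg k D = swapVar k ∘ₗ SubstOp F := by
  apply Finsupp.lhom_ext
  intro n p
  simp only [LinearMap.comp_apply, substNeg_single]
  rw [comp_pow_comm_apply (SubstOp_negD F h) n (single 0 p), SubstOp_single F n p,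
    comp_pow_comm_apply (swap_lamMul2 (k := k) (M := N)) n (substAdd k (F p))]
  congr 1
  have h3 := LinearMap.congr_fun (swap_substAdd (k := k) (M := N)) (F p)
  simp only [LinearMap.comp_apply] at h3
  rw [h3, SubstOp_single, pow_zero]
  rfl

lemma SubstOp_cw2 (F : M →ₗ[k] (ℕ →₀ N)) (g : N →ₗ[k] Q) :
    cw k (cw k g) ∘ₗ SubstOp F = SubstOp (cw k g ∘ₗ F) := by
  apply Finsupp.lhom_ext
  intro n p
  simp only [LinearMap.comp_apply, SubstOp_single, cw_single]
  rw [comp_pow_comm_apply (cw2_lamMul2 g) n (substAdd k (F p))]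
  congr 1
  have h1 := LinearMap.congr_fun (cw2_substAdd (k := k) g) (F p)
  simpa using h1

lemma SubstOp_add (F F' : M →ₗ[k] (ℕ →₀ N)) :
    SubstOp (F + F') = SubstOp F + SubstOp (k := k) F' := by
  apply Finsupp.lhom_ext
  intro n p
  simp [SubstOp_single, map_add]

lemma SubstOp_compl (F : M →ₗ[k] (ℕ →₀ N)) (g : Q →ₗ[k] M) :
    SubstOp (F ∘ₗ g) = SubstOp F ∘ₗ cw k g := by
  apply Finsupp.lhom_ext
  intro n p
  simp [SubstOp_single, cw_single]

lemma SubstOp_lamMulF (F : M →ₗ[k] (ℕ →₀ N)) :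
    SubstOp (lamMul k ∘ₗ F) = (lamMul2 k + muMul2 k) ∘ₗ SubstOp F := by
  apply Finsupp.lhom_ext
  intro n p
  simp only [LinearMap.comp_apply, SubstOp_single, LinearMap.add_apply]
  have h1 := LinearMap.congr_fun (substAdd_lamMul (k := k) (M := N)) (F p)
  simp only [LinearMap.comp_apply, LinearMap.add_apply] at h1
  rw [h1]
  have h2 := comp_pow_comm_apply (lamMul2_LM_comm (k := k) (M := N)).symm n
    (substAdd k (F p))
  simp only [LinearMap.add_apply, map_add] at h2 ⊢
  rw [← h2]

lemma opComp_eq {A B C V W : Type} [AddCommGroup A] [Module k A] [AddCommGroup B] [Module k B]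
    [AddCommGroup C] [Module k C] [AddCommGroup V] [Module k V] [AddCommGroup W] [Module k W]
    (F : A →ₗ[k] C →ₗ[k] (ℕ →₀ W)) (G : B →ₗ[k] V →ₗ[k] (ℕ →₀ C))
    (a : A) (b : B) (c : V) : opComp k F G a b c = cw k (F a) (G b c) := rfl

lemma opCompSwap_eq {A B C V W : Type} [AddCommGroup A] [Module k A] [AddCommGroup B] [Module k B]
    [AddCommGroup C] [Module k C] [AddCommGroup V] [Module k V] [AddCommGroup W] [Module k W]
    (F : B →ₗ[k] C →ₗ[k] (ℕ →₀ W)) (G : A →ₗ[k] V →ₗ[k] (ℕ →₀ C))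
    (b : B) (a : A) (c : V) :
    opCompSwap k F G b a c = swapVar k (opComp k F G b a c) := rfl

lemma sgn_comm (i j : ZMod 2) : sgn i j = sgn j i := by
  simp [sgn, and_comm]

lemma sgn_sgn_smul (i j : ZMod 2) (x : M) : sgn i j • sgn i j • x = x := by
  unfold sgn
  split <;> simp

end Infra2


section Infra3

variable {k : Type} [Field k] [CharZero k]
variable {M N Q R : Type} [AddCommGroup M] [Module k M] [AddCommGroup N] [Module k N]
  [AddCommGroup Q] [Module k Q] [AddCommGroup R] [Module k R]

/-- The submodule of polynomials all of whose coefficients lie in `U`. -/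
def coeffSub (U : Submodule k M) : Submodule k (ℕ →₀ M) where
  carrier := { f | ∀ n, f n ∈ U }
  add_mem' := fun hf hg n => by
    simpa only [Finsupp.add_apply] using add_mem (hf n) (hg n)
  zero_mem' := fun n => by simp
  smul_mem' := fun c f hf n => by
    simpa only [Finsupp.smul_apply] using Submodule.smul_mem _ c (hf n)

lemma mem_coeffSub {U : Submodule k M} {f : ℕ →₀ M} : f ∈ coeffSub U ↔ ∀ n, f n ∈ U :=
  Iff.rfl

lemma coeffSub_single {U : Submodule k M} {a : M} (ha : a ∈ U) (n : ℕ) :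
    (single n a : ℕ →₀ M) ∈ coeffSub U := by
  classical
  intro m
  rw [Finsupp.single_apply]
  split <;> simp [ha, U.zero_mem]

lemma coeffSub_lamMul {U : Submodule k M} {g : ℕ →₀ M} (hg : g ∈ coeffSub U) :
    lamMul k g ∈ coeffSub U := by
  intro n
  cases n with
  | zero => rw [lamMul_apply_zero]; exact U.zero_mem
  | succ n => rw [lamMul_apply_succ]; exact hg n

lemma coeffSub_cw {U : Submodule k M} {U' : Submodule k N} {f : M →ₗ[k] N}
    (hf : ∀ x ∈ U, f x ∈ U') {g : ℕ →₀ M} (hg : g ∈ coeffSub U) :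
    cw k f g ∈ coeffSub U' := by
  intro n
  rw [cw_apply]
  exact hf _ (hg n)

lemma coeffSub_lamMul2 {U : Submodule k M} {g : ℕ →₀ (ℕ →₀ M)}
    (hg : g ∈ coeffSub (coeffSub U)) : lamMul2 k g ∈ coeffSub (coeffSub U) :=
  coeffSub_cw (fun _ hx => coeffSub_lamMul hx) hg

lemma coeffSub_muMul2 {U : Submodule k M} {g : ℕ →₀ (ℕ →₀ M)}
    (hg : g ∈ coeffSub (coeffSub U)) : muMul2 k g ∈ coeffSub (coeffSub U) :=
  coeffSub_lamMul (U := coeffSub U) hg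

lemma coeffSub_LM_pow {U : Submodule k M} {g : ℕ →₀ (ℕ →₀ M)}
    (hg : g ∈ coeffSub (coeffSub U)) (n : ℕ) :
    ((((lamMul2 k + muMul2 k) : (ℕ →₀ (ℕ →₀ M)) →ₗ[k] (ℕ →₀ (ℕ →₀ M)))) ^ n) g
      ∈ coeffSub (coeffSub U) := by
  induction n with
  | zero => rw [pow_zero]; simpa using hg
  | succ n ih =>
      have e : (((lamMul2 k + muMul2 k) : (ℕ →₀ (ℕ →₀ M)) →ₗ[k] (ℕ →₀ (ℕ →₀ M))) ^ (n + 1)) g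
          = ((lamMul2 k + muMul2 k) : (ℕ →₀ (ℕ →₀ M)) →ₗ[k] (ℕ →₀ (ℕ →₀ M)))
            ((((lamMul2 k + muMul2 k) : (ℕ →₀ (ℕ →₀ M)) →ₗ[k] (ℕ →₀ (ℕ →₀ M))) ^ n) g) := by
        rw [pow_succ']; rfl
      rw [e, LinearMap.add_apply]
      exact Submodule.add_mem _ (coeffSub_lamMul2 ih) (coeffSub_muMul2 ih)

lemma coeffSub_lamMul2_pow {U : Submodule k M} {g : ℕ →₀ (ℕ →₀ M)}
    (hg : g ∈ coeffSub (coeffSub U)) (n : ℕ) :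
    (((lamMul2 k : (ℕ →₀ (ℕ →₀ M)) →ₗ[k] (ℕ →₀ (ℕ →₀ M)))) ^ n) g
      ∈ coeffSub (coeffSub U) := by
  induction n with
  | zero => rw [pow_zero]; simpa using hg
  | succ n ih =>
      have e : ((lamMul2 k : (ℕ →₀ (ℕ →₀ M)) →ₗ[k] (ℕ →₀ (ℕ →₀ M))) ^ (n + 1)) g
          = lamMul2 k (((lamMul2 k : (ℕ →₀ (ℕ →₀ M)) →ₗ[k] (ℕ →₀ (ℕ →₀ M))) ^ n) g) := by
        rw [pow_succ']; rfl
      rw [e]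
      exact coeffSub_lamMul2 ih

lemma coeffSub_substAdd {U : Submodule k M} {g : ℕ →₀ M} (hg : g ∈ coeffSub U) :
    substAdd k g ∈ coeffSub (coeffSub U) := by
  classical
  rw [substAdd, Finsupp.lsum_apply]
  refine Submodule.sum_mem _ fun n _ => ?_
  refine coeffSub_LM_pow ?_ n
  exact coeffSub_single (coeffSub_single (hg n) 0) 0

lemma coeffSub_swapVar {U : Submodule k M} {g : ℕ →₀ (ℕ →₀ M)}
    (hg : g ∈ coeffSub (coeffSub U)) : swapVar k g ∈ coeffSub (coeffSub U) := by
  classical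
  rw [swapVar, Finsupp.lsum_apply]
  refine Submodule.sum_mem _ fun n _ => ?_
  exact coeffSub_cw (fun x hx => coeffSub_single hx n) (hg n)

lemma coeffSub_SubstOp {T : Submodule k M} {U : Submodule k N} {F : M →ₗ[k] (ℕ →₀ N)}
    (hF : ∀ x ∈ T, F x ∈ coeffSub U) {g : ℕ →₀ M} (hg : g ∈ coeffSub T) :
    SubstOp F g ∈ coeffSub (coeffSub U) := by
  classical
  rw [SubstOp, LinearMap.comp_apply, Finsupp.lsum_apply]
  refine Submodule.sum_mem _ fun n _ => ?_
  simp only [LinearMap.coe_comp, Function.comp_apply]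
  exact coeffSub_lamMul2_pow (coeffSub_substAdd ((coeffSub_cw (fun x hx => hF x hx) hg) n)) n

lemma coeffSub_zsmul {U : Submodule k M} {g : ℕ →₀ M} (hg : g ∈ coeffSub U) (z : ℤ) :
    z • g ∈ coeffSub U := zsmul_mem hg z

lemma cw_injective {f : M →ₗ[k] N} (hf : Function.Injective f) :
    Function.Injective (cw k f) := by
  intro x y h
  ext n
  apply hf
  have := congrArg (fun z => z n) h
  simpa [cw_apply] using this

lemma lamMul_injective : Function.Injective (lamMul k (M := M)) :=
  Finsupp.mapDomain_injective Nat.succ_injective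

/-- Restriction of a polynomial with coefficients in `U` to a `↥U`-valued polynomial. -/
def cwSub (U : Submodule k M) (g : ℕ →₀ M) (h : ∀ n, g n ∈ U) : ℕ →₀ ↥U where
  support := g.support
  toFun := fun n => ⟨g n, h n⟩
  mem_support_toFun := fun n => by
    simp [Finsupp.mem_support_iff, Subtype.ext_iff]

lemma cw_subtype_cwSub (U : Submodule k M) (g : ℕ →₀ M) (h : ∀ n, g n ∈ U) :
    cw k U.subtype (cwSub U g h) = g := by
  ext n
  simp [cw_apply, cwSub]

lemma cwSub_apply (U : Submodule k M) (g : ℕ →₀ M) (h : ∀ n, g n ∈ U) (n : ℕ) :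
    cwSub U g h n = ⟨g n, h n⟩ := rfl

end Infra3


section Identities

variable {k : Type} [Field k] [CharZero k]
variable {P : Type} [AddCommGroup P] [Module k P]
variable {DP : P →ₗ[k] P} {parP : ZMod 2 → Submodule k P}
variable {BP MP : P →ₗ[k] P →ₗ[k] (ℕ →₀ P)}

lemma leibniz_rearranged (hP : IsPoissonConfSuper k DP parP BP MP)
    {i j : ZMod 2} {a b : P} (ha : a ∈ parP i) (hb : b ∈ parP j) (c : P) :
    opComp k BP MP a b c - sgn i j • opCompSwap k MP BP b a c = opSubst k BP MP a b c := by
  rw [hP.leibniz i j a b c ha hb]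
  abel

lemma jacobi_rearranged (hP : IsPoissonConfSuper k DP parP BP MP)
    {i j : ZMod 2} {a b : P} (ha : a ∈ parP i) (hb : b ∈ parP j) (c : P) :
    opComp k BP BP a b c - sgn i j • opCompSwap k BP BP b a c = opSubst k BP BP a b c := by
  rw [hP.lie.jacobi i j a b c ha hb]
  abel

lemma mul_br_identity (hP : IsPoissonConfSuper k DP parP BP MP)
    {i j : ZMod 2} {a b : P} (ha : a ∈ parP i) (hb : b ∈ parP j) (c : P) :
    opComp k MP BP a b c - sgn i j • opCompSwap k BP MP b a c = opSubst k BP MP a b c := by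
  have hFD : (MP.flip c) ∘ₗ DP = -(lamMul k ∘ₗ MP.flip c) := by
    refine LinearMap.ext fun p => ?_
    simp only [LinearMap.comp_apply, LinearMap.flip_apply, LinearMap.neg_apply]
    rw [hP.mul_sesqui.dleft p c]
  have hswap : swapVar k (opSubst k BP MP b a c) = -(sgn i j • opSubst k BP MP a b c) := by
    rw [opSubst_eq, hP.lie.skew j i b a hb ha, map_neg, map_zsmul]
    have h1 := LinearMap.congr_fun (SubstOp_substNeg (MP.flip c) hFD) (BP a b)
    simp only [LinearMap.comp_apply] at h1
    rw [h1, map_neg, map_zsmul, swap_swap_apply, sgn_comm j i, opSubst_eq]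
  have h2 : opCompSwap k BP MP b a c
      = swapVar k (opSubst k BP MP b a c) + sgn j i • opComp k MP BP a b c := by
    rw [opCompSwap_eq, hP.leibniz j i b a c hb ha, map_add, map_zsmul, opCompSwap_eq,
      swap_swap_apply]
  rw [h2, hswap, smul_add, smul_neg, sgn_sgn_smul, sgn_comm j i, sgn_sgn_smul]
  abel

end Identities


section Infra4

variable {k : Type} [Field k] [CharZero k]
variable {M N Q : Type} [AddCommGroup M] [Module k M] [AddCommGroup N] [Module k N]
  [AddCommGroup Q] [Module k Q]

lemma cw_lamMul_apply (f : M →ₗ[k] N) (g : ℕ →₀ M) :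
    cw k f (lamMul k g) = lamMul k (cw k f g) := by
  simpa using LinearMap.congr_fun (cw_lamMul f) g

lemma cw_comp_apply (f : N →ₗ[k] Q) (g : M →ₗ[k] N) (x : ℕ →₀ M) :
    cw k (f ∘ₗ g) x = cw k f (cw k g x) := by
  rw [cw_comp]; rfl

lemma cw2_swapVar_apply (f : M →ₗ[k] N) (x : ℕ →₀ (ℕ →₀ M)) :
    cw k (cw k f) (swapVar k x) = swapVar k (cw k (cw k f) x) := by
  simpa using LinearMap.congr_fun (cw2_swapVar f) x

lemma swap_lamMul2_apply (x : ℕ →₀ (ℕ →₀ M)) :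
    swapVar k (lamMul2 k x) = muMul2 k (swapVar k x) := by
  simpa using LinearMap.congr_fun (swap_lamMul2 (k := k) (M := M)) x

lemma swap_muMul2_apply (x : ℕ →₀ (ℕ →₀ M)) :
    swapVar k (muMul2 k x) = lamMul2 k (swapVar k x) := by
  simpa using LinearMap.congr_fun (swap_muMul2 (k := k) (M := M)) x

lemma SubstOp_cw2_apply (F : M →ₗ[k] (ℕ →₀ N)) (g : N →ₗ[k] Q) (x : ℕ →₀ M) :
    cw k (cw k g) (SubstOp F x) = SubstOp (cw k g ∘ₗ F) x := by
  simpa using LinearMap.congr_fun (SubstOp_cw2 F g) x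

lemma SubstOp_add_apply (F F' : M →ₗ[k] (ℕ →₀ N)) (x : ℕ →₀ M) :
    SubstOp (F + F') x = SubstOp F x + SubstOp (k := k) F' x := by
  rw [SubstOp_add]; rfl

lemma SubstOp_compl_apply (F : M →ₗ[k] (ℕ →₀ N)) (g : Q →ₗ[k] M) (x : ℕ →₀ Q) :
    SubstOp (F ∘ₗ g) x = SubstOp F (cw k g x) := by
  rw [SubstOp_compl]; rfl

lemma SubstOp_lamMulF_apply (F : M →ₗ[k] (ℕ →₀ N)) (x : ℕ →₀ M) :
    SubstOp (lamMul k ∘ₗ F) x = lamMul2 k (SubstOp F x) + muMul2 k (SubstOp F x) := by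
  have := LinearMap.congr_fun (SubstOp_lamMulF (k := k) F) x
  simpa using this

end Infra4

set_option maxHeartbeats 2000000 in
/-- **Embedding into a Poisson conformal superalgebra gives a finite faithful
representation.** Let `L` be a Lie conformal superalgebra which is finitely generated as an
`H`-module, `P` a Poisson conformal superalgebra, and `τ : L → P` an injective
parity-preserving homomorphism of `H`-modules compatible with the `λ`-brackets. If for every
`0 ≠ a ∈ L` there is `b ∈ L` with `(τ(a)_λ τ(b)) ≠ 0`, then `L` has a finite faithful
conformal representation. -/
theorem ffr_of_embedding_into_poisson
    (L P : Type) [AddCommGroup L] [Module k L] [AddCommGroup P] [Module k P]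
    (DL : L →ₗ[k] L) (parL : ZMod 2 → Submodule k L) (BL : L →ₗ[k] L →ₗ[k] (ℕ →₀ L))
    (hL : IsLieConfSuper k DL parL BL) (hLfin : IsHFinite k DL)
    (DP : P →ₗ[k] P) (parP : ZMod 2 → Submodule k P)
    (BP MP : P →ₗ[k] P →ₗ[k] (ℕ →₀ P))
    (hP : IsPoissonConfSuper k DP parP BP MP)
    (τ : L →ₗ[k] P) (hτinj : Function.Injective τ)
    (hτD : ∀ a, τ (DL a) = DP (τ a))
    (hτpar : ∀ i a, a ∈ parL i → τ a ∈ parP i)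
    (hτbr : ∀ a b, cw k τ (BL a b) = BP (τ a) (τ b))
    (hnondeg : ∀ a : L, a ≠ 0 → ∃ b : L, MP (τ a) (τ b) ≠ 0) :
    HasFFR k DL parL BL := by
  classical
  obtain ⟨sL, hsL⟩ := hLfin
  -- `L` is spanned over `k` by iterated derivatives of the generators.
  have hLspan : (Submodule.span k {x : L | ∃ c ∈ sL, ∃ r : ℕ, (DL ^ r) c = x}) = ⊤ := by
    apply hsL
    · intro x hx
      induction hx using Submodule.span_induction with
      | mem x hx =>
          obtain ⟨c, hc, r, rfl⟩ := hx
          refine Submodule.subset_span ⟨c, hc, r + 1, ?_⟩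
          rw [pow_succ']; rfl
      | zero => simp
      | add x y _ _ ihx ihy => rw [map_add]; exact Submodule.add_mem _ ihx ihy
      | smul t x _ ihx => rw [map_smul]; exact Submodule.smul_mem _ t ihx
    · intro x hx
      exact Submodule.subset_span ⟨x, hx, 0, by rw [pow_zero]; rfl⟩
  -- parity decomposition in `L`
  have decompL : ∀ a : L, ∃ a0 a1, a0 ∈ parL 0 ∧ a1 ∈ parL 1 ∧ a = a0 + a1 := by
    intro a
    have ha : a ∈ parL 0 ⊔ parL 1 := by rw [hL.graded.sup_eq_top]; trivial
    obtain ⟨a0, h0, a1, h1, hsum⟩ := Submodule.mem_sup.mp ha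
    exact ⟨a0, a1, h0, h1, hsum.symm⟩
  -- the H-submodule of `P` spanned by the coefficients of products
  set U : Submodule k P :=
    Submodule.span k {p | ∃ a b : L, ∃ m n : ℕ, (DP ^ m) (MP (τ a) (τ b) n) = p} with hUdef
  have hUgen : ∀ (a b : L) (m n : ℕ), (DP ^ m) (MP (τ a) (τ b) n) ∈ U :=
    fun a b m n => Submodule.subset_span ⟨a, b, m, n, rfl⟩
  have hUcoeff : ∀ (a b : L) (n : ℕ), MP (τ a) (τ b) n ∈ U := by
    intro a b n
    have := hUgen a b 0 n
    rwa [pow_zero] at this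
  have hUD : ∀ p ∈ U, DP p ∈ U := by
    intro p hp
    induction hp using Submodule.span_induction with
    | mem x hx =>
        obtain ⟨a, b, m, n, rfl⟩ := hx
        have : DP ((DP ^ m) (MP (τ a) (τ b) n)) = (DP ^ (m + 1)) (MP (τ a) (τ b) n) := by
          rw [pow_succ']; rfl
        rw [this]; exact hUgen a b (m + 1) n
    | zero => simp
    | add x y _ _ ihx ihy => rw [map_add]; exact Submodule.add_mem _ ihx ihy
    | smul t x _ ihx => rw [map_smul]; exact Submodule.smul_mem _ t ihx
  -- coefficients of brackets of `τ L` with `U` stay in `U`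
  have key0 : ∀ (i j : ZMod 2) (c a : L), c ∈ parL i → a ∈ parL j → ∀ (b : L) (m n : ℕ),
      BP (τ c) (MP (τ a) (τ b) m) n ∈ U := by
    intro i j c a hc ha b m n
    have hrange : ∀ (d : L), cw k τ (BL c d) ∈ coeffSub (LinearMap.range τ) := by
      intro d n'
      rw [cw_apply]
      exact ⟨BL c d n', rfl⟩
    have hcomp : opComp k BP MP (τ c) (τ a) (τ b) ∈ coeffSub (coeffSub U) := by
      rw [hP.leibniz i j (τ c) (τ a) (τ b) (hτpar i c hc) (hτpar j a ha)]
      refine Submodule.add_mem _ ?_ (coeffSub_zsmul ?_ _)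
      · rw [opSubst_eq]
        refine coeffSub_SubstOp (T := LinearMap.range τ) ?_ ?_
        · rintro x ⟨d, rfl⟩ n'
          exact hUcoeff d b n'
        · rw [← hτbr]
          exact hrange a
      · rw [opCompSwap_eq]
        refine coeffSub_swapVar ?_
        rw [opComp_eq]
        refine coeffSub_cw (U := LinearMap.range τ) (U' := coeffSub U) ?_ ?_
        · rintro x ⟨d, rfl⟩ n'
          exact hUcoeff a d n'
        · rw [← hτbr]
          exact hrange b
    have := (mem_coeffSub.mp ((mem_coeffSub.mp hcomp) m)) n
    rwa [opComp_eq, cw_apply] at this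
  have key1 : ∀ (c a b : L) (m n : ℕ), BP (τ c) (MP (τ a) (τ b) m) n ∈ U := by
    intro c a b m n
    obtain ⟨c0, c1, hc0, hc1, rfl⟩ := decompL c
    obtain ⟨a0, a1, ha0, ha1, rfl⟩ := decompL a
    simp only [map_add, LinearMap.add_apply, Finsupp.add_apply]
    refine add_mem (add_mem ?_ ?_) (add_mem ?_ ?_) <;>
      first
        | exact key0 0 0 c0 a0 hc0 ha0 b m n
        | exact key0 0 1 c0 a1 hc0 ha1 b m n
        | exact key0 1 0 c1 a0 hc1 ha0 b m n
        | exact key0 1 1 c1 a1 hc1 ha1 b m n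
  have key2 : ∀ (c : L) (m : ℕ) (a b : L) (j n : ℕ),
      BP (τ c) ((DP ^ m) (MP (τ a) (τ b) j)) n ∈ U := by
    intro c m
    induction m with
    | zero =>
        intro a b j n
        rw [pow_zero]
        exact key1 c a b j n
    | succ m ih =>
        intro a b j n
        have e : (DP ^ (m + 1)) (MP (τ a) (τ b) j) = DP ((DP ^ m) (MP (τ a) (τ b) j)) := by
          rw [pow_succ']; rfl
        rw [e, hP.lie.sesqui.dright, Finsupp.add_apply]
        refine add_mem ?_ ?_
        · rw [cw_apply]
          exact hUD _ (ih a b j n)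
        · rcases n with _ | n
          · rw [lamMul_apply_zero]; exact U.zero_mem
          · rw [lamMul_apply_succ]; exact ih a b j n
  have hBPU : ∀ (c : L), ∀ p ∈ U, ∀ n, BP (τ c) p n ∈ U := by
    intro c p hp
    induction hp using Submodule.span_induction with
    | mem x hx =>
        obtain ⟨a, b, m, j, rfl⟩ := hx
        exact key2 c m a b j
    | zero => intro n; simp
    | add x y _ _ ihx ihy =>
        intro n
        rw [map_add, Finsupp.add_apply]
        exact add_mem (ihx n) (ihy n)
    | smul t x _ ihx =>
        intro n
        rw [map_smul, Finsupp.smul_apply]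
        exact Submodule.smul_mem _ _ (ihx n)
  -- parity is preserved by powers of `DP`
  have hDPpow : ∀ (i : ZMod 2) (m : ℕ) (p : P), p ∈ parP i → (DP ^ m) p ∈ parP i := by
    intro i m
    induction m with
    | zero => intro p hp; rwa [pow_zero]
    | succ m ih =>
        intro p hp
        have e : (DP ^ (m + 1)) p = DP ((DP ^ m) p) := by rw [pow_succ']; rfl
        rw [e]
        exact hP.lie.graded.map_d i _ (ih p hp)
  -- `U` decomposes into parities
  have hUsup : U ≤ (U ⊓ parP 0) ⊔ (U ⊓ parP 1) := by
    rw [hUdef]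
    refine Submodule.span_le.mpr ?_
    rintro p ⟨a, b, m, n, rfl⟩
    obtain ⟨a0, a1, ha0, ha1, rfl⟩ := decompL a
    obtain ⟨b0, b1, hb0, hb1, rfl⟩ := decompL b
    have hterm : ∀ (i j : ZMod 2) (x y : L), x ∈ parL i → y ∈ parL j →
        (DP ^ m) (MP (τ x) (τ y) n) ∈ (U ⊓ parP 0) ⊔ (U ⊓ parP 1) := by
      intro i j x y hx hy
      have hpar : (DP ^ m) (MP (τ x) (τ y) n) ∈ parP (i + j) :=
        hDPpow _ m _ (hP.mul_parity i j (τ x) (τ y) (hτpar i x hx) (hτpar j y hy) n)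
      have hu : (DP ^ m) (MP (τ x) (τ y) n) ∈ U := hUgen x y m n
      rcases (show ∀ z : ZMod 2, z = 0 ∨ z = 1 by decide) (i + j) with h | h
      · exact Submodule.mem_sup_left ⟨hu, h ▸ hpar⟩
      · exact Submodule.mem_sup_right ⟨hu, h ▸ hpar⟩
    have expand : MP (τ (a0 + a1)) (τ (b0 + b1)) n
        = MP (τ a0) (τ b0) n + MP (τ a0) (τ b1) n
          + (MP (τ a1) (τ b0) n + MP (τ a1) (τ b1) n) := by
      simp only [map_add, LinearMap.add_apply, Finsupp.add_apply]
      abel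
    rw [SetLike.mem_coe, expand]
    simp only [map_add]
    exact add_mem (add_mem (hterm 0 0 a0 b0 ha0 hb0) (hterm 0 1 a0 b1 ha0 hb1))
      (add_mem (hterm 1 0 a1 b0 ha1 hb0) (hterm 1 1 a1 b1 ha1 hb1))
  -- the representation space
  let DU : ↥U →ₗ[k] ↥U := DP.restrict (p := U) (q := U) (fun p hp => hUD p hp)
  have hDUcoe : ∀ u : ↥U, (DU u : P) = DP (u : P) := fun u => rfl
  let parU : ZMod 2 → Submodule k ↥U := fun i => (parP i).comap U.subtype
  let DV : (L × ↥U) →ₗ[k] (L × ↥U) := DL.prodMap DU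
  let parV : ZMod 2 → Submodule k (L × ↥U) := fun i => (parL i).prod (parU i)
  have hGraded : IsGradedHMod k DV parV := by
    constructor
    · refine Submodule.eq_top_iff'.mpr fun v => ?_
      obtain ⟨x0, x1, hx0, hx1, hx⟩ := decompL v.1
      obtain ⟨u0, hu0, u1, hu1, husum⟩ := Submodule.mem_sup.mp (hUsup v.2.2)
      refine Submodule.mem_sup.mpr ⟨(x0, ⟨u0, hu0.1⟩), ⟨hx0, hu0.2⟩,
        (x1, ⟨u1, hu1.1⟩), ⟨hx1, hu1.2⟩, ?_⟩
      have : v = (v.1, v.2) := rfl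
      rw [this, Prod.mk_add_mk]
      refine Prod.ext hx.symm ?_
      exact Subtype.ext husum
    · refine (Submodule.eq_bot_iff _).mpr fun v hv => ?_
      obtain ⟨⟨h01, h02⟩, ⟨h11, h12⟩⟩ := Submodule.mem_inf.mp hv
      have hx : v.1 = 0 := by
        have : v.1 ∈ parL 0 ⊓ parL 1 := ⟨h01, h11⟩
        rw [hL.graded.inf_eq_bot] at this
        simpa using this
      have hu : v.2 = 0 := by
        have : (v.2 : P) ∈ parP 0 ⊓ parP 1 := ⟨h02, h12⟩
        rw [hP.lie.graded.inf_eq_bot] at this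
        exact Subtype.ext (by simpa using this)
      calc v = (v.1, v.2) := rfl
        _ = 0 := by rw [hx, hu]; rfl
    · rintro i ⟨x, u⟩ ⟨hx, hu⟩
      refine ⟨hL.graded.map_d i x hx, ?_⟩
      show (DU u : P) ∈ parP i
      rw [hDUcoe]
      exact hP.lie.graded.map_d i _ hu
  -- the auxiliary `P`-valued pairing
  let σ : L →ₗ[k] (L × ↥U) →ₗ[k] (ℕ →₀ P) := LinearMap.mk₂ k
    (fun a v => lamMul k (MP (τ a) (τ v.1)) + BP (τ a) (U.subtype v.2))
    (fun a a' v => by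
      simp only [map_add, LinearMap.add_apply]
      abel)
    (fun t a v => by
      simp only [map_smul, LinearMap.smul_apply, smul_add])
    (fun a v w => by
      simp only [Prod.fst_add, Prod.snd_add, map_add, LinearMap.add_apply]
      abel)
    (fun t a v => by
      simp only [Prod.smul_fst, Prod.smul_snd, map_smul, LinearMap.smul_apply, smul_add])
  have hσdef : ∀ a v, σ a v = lamMul k (MP (τ a) (τ v.1)) + BP (τ a) (U.subtype v.2) :=
    fun a v => rfl
  have hσU : ∀ a v n, σ a v n ∈ U := by
    intro a v n
    rw [hσdef, Finsupp.add_apply]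
    refine add_mem ?_ (hBPU a _ v.2.2 n)
    rcases n with _ | n
    · rw [lamMul_apply_zero]; exact U.zero_mem
    · rw [lamMul_apply_succ]; exact hUcoeff a v.1 n
  have hιinj : Function.Injective (cw k U.subtype) :=
    cw_injective (k := k) Subtype.val_injective
  let ρ₂fun : L → (L × ↥U) → (ℕ →₀ ↥U) := fun a v => cwSub U (σ a v) (hσU a v)
  have hρ₂cw : ∀ a v, cw k U.subtype (ρ₂fun a v) = σ a v :=
    fun a v => cw_subtype_cwSub U (σ a v) (hσU a v)
  have hρ₂al : ∀ a a' v, ρ₂fun (a + a') v = ρ₂fun a v + ρ₂fun a' v := by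
    intro a a' v
    apply hιinj
    simp only [map_add, hρ₂cw, LinearMap.add_apply]
  have hρ₂sl : ∀ (t : k) a v, ρ₂fun (t • a) v = t • ρ₂fun a v := by
    intro t a v
    apply hιinj
    simp only [map_smul, hρ₂cw, LinearMap.smul_apply]
  have hρ₂ar : ∀ a v w, ρ₂fun a (v + w) = ρ₂fun a v + ρ₂fun a w := by
    intro a v w
    apply hιinj
    simp only [map_add, hρ₂cw, LinearMap.add_apply]
  have hρ₂sr : ∀ (t : k) a v, ρ₂fun a (t • v) = t • ρ₂fun a v := by
    intro t a v
    apply hιinj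
    simp only [map_smul, hρ₂cw, LinearMap.smul_apply]
  -- the representation map
  let ρ : L →ₗ[k] (L × ↥U) →ₗ[k] (ℕ →₀ (L × ↥U)) := LinearMap.mk₂ k
    (fun a v => cw k (LinearMap.inl k L ↥U) (BL a v.1)
      + cw k (LinearMap.inr k L ↥U) (ρ₂fun a v))
    (fun a a' v => by
      simp only [map_add, LinearMap.add_apply, hρ₂al]
      abel)
    (fun t a v => by
      simp only [map_smul, LinearMap.smul_apply, hρ₂sl, smul_add])
    (fun a v w => by
      simp only [Prod.fst_add, map_add, LinearMap.add_apply, hρ₂ar]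
      abel)
    (fun t a v => by
      simp only [Prod.smul_fst, map_smul, LinearMap.smul_apply, hρ₂sr, smul_add])
  have hρdef : ∀ a v, ρ a v = cw k (LinearMap.inl k L ↥U) (BL a v.1)
      + cw k (LinearMap.inr k L ↥U) (ρ₂fun a v) := fun a v => rfl
  let fstV : (L × ↥U) →ₗ[k] L := LinearMap.fst k L ↥U
  let sndP : (L × ↥U) →ₗ[k] P := U.subtype ∘ₗ LinearMap.snd k L ↥U
  have hρapp : ∀ a v n, ρ a v n = (BL a v.1 n, ρ₂fun a v n) := by
    intro a v n
    rw [hρdef, Finsupp.add_apply]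
    simp [cw_apply, Prod.ext_iff]
  have hρfst : ∀ a v, cw k fstV (ρ a v) = BL a v.1 := by
    intro a v
    ext n
    rw [cw_apply, hρapp]
    rfl
  have hρsnd : ∀ a v, cw k sndP (ρ a v) = σ a v := by
    intro a v
    ext n
    rw [cw_apply, hρapp]
    show (ρ₂fun a v n : P) = σ a v n
    rw [cwSub_apply]
  -- extensionality via the two projections
  have hVext : ∀ f g : ℕ →₀ (L × ↥U), cw k fstV f = cw k fstV g →
      cw k sndP f = cw k sndP g → f = g := by
    intro f g h1 h2
    refine Finsupp.ext fun n => ?_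
    have e1 := congrArg (fun z => z n) h1
    have e2 := congrArg (fun z => z n) h2
    simp only [cw_apply] at e1 e2
    exact Prod.ext e1 (Subtype.ext e2)
  have hV2ext : ∀ f g : ℕ →₀ (ℕ →₀ (L × ↥U)), cw k (cw k fstV) f = cw k (cw k fstV) g →
      cw k (cw k sndP) f = cw k (cw k sndP) g → f = g := by
    intro f g h1 h2
    refine Finsupp.ext fun m => Finsupp.ext fun n => ?_
    have e1 := congrArg (fun z => z m n) h1
    have e2 := congrArg (fun z => z m n) h2
    simp only [cw_apply] at e1 e2
    exact Prod.ext e1 (Subtype.ext e2)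
  -- sesqui-linearity of ρ
  have hfstDV : fstV ∘ₗ DV = DL ∘ₗ fstV := LinearMap.ext fun w => rfl
  have hsndDV : sndP ∘ₗ DV = DP ∘ₗ sndP := LinearMap.ext fun w => rfl
  have hSesq : IsSesqui k DL DV DV ρ := by
    constructor
    · intro a v
      refine hVext _ _ ?_ ?_
      · rw [hρfst, map_neg, cw_lamMul_apply, hρfst, hL.sesqui.dleft]
      · rw [hρsnd, map_neg, cw_lamMul_apply, hρsnd, hσdef, hσdef, hτD,
          hP.mul_sesqui.dleft, hP.lie.sesqui.dleft]
        simp only [map_neg, map_add]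
        abel
    · intro a v
      refine hVext _ _ ?_ ?_
      · rw [map_add, hρfst, ← cw_comp_apply, hfstDV, cw_comp_apply, hρfst,
          cw_lamMul_apply, hρfst]
        have e1 : (DV v).1 = DL v.1 := rfl
        rw [e1, hL.sesqui.dright]
      · rw [map_add, hρsnd, ← cw_comp_apply, hsndDV, cw_comp_apply, hρsnd,
          cw_lamMul_apply, hρsnd, hσdef a (DV v), hσdef a v]
        have e1 : (DV v).1 = DL v.1 := rfl
        have e2 : U.subtype (DV v).2 = DP (U.subtype v.2) := rfl
        rw [e1, e2, hτD, hP.mul_sesqui.dright, hP.lie.sesqui.dright]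
        simp only [map_add, cw_lamMul_apply]
        abel
  -- parity of ρ
  have hRepPar : ∀ (i j : ZMod 2) (a : L) (x : L × ↥U), a ∈ parL i → x ∈ parV j →
      ∀ n, ρ a x n ∈ parV (i + j) := by
    intro i j a x ha hx n
    obtain ⟨hx1, hx2⟩ := hx
    rw [hρapp]
    refine ⟨hL.parity i j a x.1 ha hx1 n, ?_⟩
    show (ρ₂fun a x n : P) ∈ parP (i + j)
    have ecoe : (ρ₂fun a x n : P) = σ a x n := by rw [cwSub_apply]
    rw [ecoe, hσdef, Finsupp.add_apply]
    refine Submodule.add_mem _ ?_ (hP.lie.parity i j (τ a) _ (hτpar i a ha) hx2 n)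
    rcases n with _ | n
    · rw [lamMul_apply_zero]; exact Submodule.zero_mem _
    · rw [lamMul_apply_succ]
      exact hP.mul_parity i j (τ a) (τ x.1) (hτpar i a ha) (hτpar j x.1 hx1) n
  -- Jacobi identity for ρ
  have hρfstC : ∀ c : L, cw k fstV ∘ₗ ρ c = BL c ∘ₗ fstV := by
    intro c
    refine LinearMap.ext fun v => ?_
    exact hρfst c v
  have hρsndC : ∀ c : L, cw k sndP ∘ₗ ρ c = σ c := by
    intro c
    refine LinearMap.ext fun v => ?_
    simpa using hρsnd c v
  have hCompFst : ∀ (c d : L) (y : L × ↥U),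
      cw k (cw k fstV) (opComp k ρ ρ c d y) = opComp k BL BL c d y.1 := by
    intro c d y
    rw [opComp_eq, ← cw_comp_apply, hρfstC, cw_comp_apply, hρfst, opComp_eq]
  have hσinl : ∀ c : L, σ c ∘ₗ LinearMap.inl k L ↥U = lamMul k ∘ₗ ((MP (τ c)) ∘ₗ τ) := by
    intro c
    refine LinearMap.ext fun y' => ?_
    simp only [LinearMap.comp_apply, LinearMap.inl_apply]
    rw [hσdef]
    simp
  have hσinr : ∀ c : L, σ c ∘ₗ LinearMap.inr k L ↥U = BP (τ c) ∘ₗ U.subtype := by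
    intro c
    refine LinearMap.ext fun u => ?_
    simp only [LinearMap.comp_apply, LinearMap.inr_apply]
    rw [hσdef]
    simp
  have hCompSnd : ∀ (c d : L) (y : L × ↥U),
      cw k (cw k sndP) (opComp k ρ ρ c d y)
        = lamMul2 k (opComp k MP BP (τ c) (τ d) (τ y.1))
          + muMul2 k (opComp k BP MP (τ c) (τ d) (τ y.1))
          + opComp k BP BP (τ c) (τ d) (U.subtype y.2) := by
    intro c d y
    rw [opComp_eq, ← cw_comp_apply, hρsndC, hρdef d y, map_add, ← cw_comp_apply,
      ← cw_comp_apply, hσinl, hσinr, cw_comp_apply, cw_comp_apply, cw_comp_apply,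
      hτbr, hρ₂cw, hσdef d y, map_add, cw_lamMul_apply]
    rw [opComp_eq, opComp_eq, opComp_eq]
    have e1 : cw k (lamMul k) (cw k (MP (τ c)) (BP (τ d) (τ y.1)))
        = lamMul2 k (cw k (MP (τ c)) (BP (τ d) (τ y.1))) := rfl
    have e2 : lamMul k (cw k (BP (τ c)) (MP (τ d) (τ y.1)))
        = muMul2 k (cw k (BP (τ c)) (MP (τ d) (τ y.1))) := rfl
    rw [e1, e2]
    abel
  have hSwapFst : ∀ (c d : L) (y : L × ↥U),
      cw k (cw k fstV) (opCompSwap k ρ ρ c d y) = opCompSwap k BL BL c d y.1 := by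
    intro c d y
    rw [opCompSwap_eq, cw2_swapVar_apply, hCompFst, opCompSwap_eq]
  have hSwapSnd : ∀ (c d : L) (y : L × ↥U),
      cw k (cw k sndP) (opCompSwap k ρ ρ c d y)
        = muMul2 k (opCompSwap k MP BP (τ c) (τ d) (τ y.1))
          + lamMul2 k (opCompSwap k BP MP (τ c) (τ d) (τ y.1))
          + opCompSwap k BP BP (τ c) (τ d) (U.subtype y.2) := by
    intro c d y
    rw [opCompSwap_eq, cw2_swapVar_apply, hCompSnd, map_add, map_add,
      swap_lamMul2_apply, swap_muMul2_apply, opCompSwap_eq (k := k) MP BP,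
      opCompSwap_eq (k := k) BP MP, opCompSwap_eq (k := k) BP BP]
  have hJac : ∀ (i j : ZMod 2) (a b : L) (x : L × ↥U), a ∈ parL i → b ∈ parL j →
      opComp k ρ ρ a b x - sgn i j • opCompSwap k ρ ρ b a x = opSubst k BL ρ a b x := by
    intro i j a b x ha hb
    have hSubFst : cw k (cw k fstV) (opSubst k BL ρ a b x) = opSubst k BL BL a b x.1 := by
      rw [opSubst_eq, SubstOp_cw2_apply]
      have e : cw k fstV ∘ₗ ρ.flip x = BL.flip x.1 := by
        refine LinearMap.ext fun c => ?_
        simpa using hρfst c x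
      rw [e, ← opSubst_eq]
    have hSubSnd : cw k (cw k sndP) (opSubst k BL ρ a b x)
        = (lamMul2 k (opSubst k BP MP (τ a) (τ b) (τ x.1))
           + muMul2 k (opSubst k BP MP (τ a) (τ b) (τ x.1)))
          + opSubst k BP BP (τ a) (τ b) (U.subtype x.2) := by
      rw [opSubst_eq, SubstOp_cw2_apply]
      have e : cw k sndP ∘ₗ ρ.flip x
          = (lamMul k ∘ₗ MP.flip (τ x.1)) ∘ₗ τ + BP.flip (U.subtype x.2) ∘ₗ τ := by
        refine LinearMap.ext fun c => ?_
        simp only [LinearMap.comp_apply, LinearMap.add_apply, LinearMap.flip_apply]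
        exact (hρsnd c x).trans (hσdef c x)
      rw [e, SubstOp_add_apply,
        SubstOp_compl_apply (F := lamMul k ∘ₗ MP.flip (τ x.1)) (g := τ),
        SubstOp_lamMulF_apply,
        SubstOp_compl_apply (F := BP.flip (U.subtype x.2)) (g := τ), hτbr,
        ← opSubst_eq (k := k) BP MP (τ a) (τ b) (τ x.1),
        ← opSubst_eq (k := k) BP BP (τ a) (τ b) (U.subtype x.2)]
    refine hV2ext _ _ ?_ ?_
    · rw [map_sub, map_zsmul, hCompFst, hSwapFst, hSubFst,
        hL.jacobi i j a b x.1 ha hb]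
      abel
    · rw [map_sub, map_zsmul, hCompSnd, hSwapSnd, hSubSnd]
      have E1 := mul_br_identity hP (hτpar i a ha) (hτpar j b hb) (τ x.1)
      have E2 := leibniz_rearranged hP (hτpar i a ha) (hτpar j b hb) (τ x.1)
      have E3 := jacobi_rearranged hP (hτpar i a ha) (hτpar j b hb) (U.subtype x.2)
      have F1 : lamMul2 k (opComp k MP BP (τ a) (τ b) (τ x.1))
          - sgn i j • lamMul2 k (opCompSwap k BP MP (τ b) (τ a) (τ x.1))
          = lamMul2 k (opSubst k BP MP (τ a) (τ b) (τ x.1)) := by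
        rw [← map_zsmul, ← map_sub, E1]
      have F2 : muMul2 k (opComp k BP MP (τ a) (τ b) (τ x.1))
          - sgn i j • muMul2 k (opCompSwap k MP BP (τ b) (τ a) (τ x.1))
          = muMul2 k (opSubst k BP MP (τ a) (τ b) (τ x.1)) := by
        rw [← map_zsmul, ← map_sub, E2]
      rw [← F1, ← F2, ← E3]
      simp only [smul_add]
      abel
  -- assembling the representation
  refine ⟨L × ↥U, inferInstance, inferInstance, DV, parV, ρ, hGraded,
    ⟨hSesq, hRepPar, hJac⟩, ?_, ?_⟩
  · -- finiteness
    refine ⟨(sL.image fun x => ((x, 0) : L × ↥U)) ∪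
      ((sL ×ˢ sL).biUnion fun q => (MP (τ q.1) (τ q.2)).support.image
        fun n => ((0, ⟨MP (τ q.1) (τ q.2) n, hUcoeff q.1 q.2 n⟩) : L × ↥U)), ?_⟩
    intro W hWD hWs
    have hsub1 : ∀ x ∈ sL, ((x, 0) : L × ↥U) ∈ W := by
      intro x hx
      exact hWs (Finset.mem_coe.mpr
        (Finset.mem_union_left _ (Finset.mem_image_of_mem _ hx)))
    have hW1 : ∀ x : L, ((x, 0) : L × ↥U) ∈ W := by
      have htop : Submodule.comap (LinearMap.inl k L ↥U) W = ⊤ := by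
        apply hsL
        · intro x hx
          simp only [Submodule.mem_comap, LinearMap.inl_apply] at hx ⊢
          have e : ((DL x, 0) : L × ↥U) = DV (x, 0) := by
            refine Prod.ext rfl ?_
            show (0 : ↥U) = DU 0
            rw [map_zero]
          rw [e]
          exact hWD _ hx
        · intro x hx
          refine Submodule.mem_comap.mpr ?_
          simpa using hsub1 x hx
      intro x
      have hx : x ∈ Submodule.comap (LinearMap.inl k L ↥U) W := by rw [htop]; trivial
      simpa using hx
    let W2 : Submodule k P :=
      Submodule.map U.subtype (Submodule.comap (LinearMap.inr k L ↥U) W)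
    have hW2I : ∀ u : ↥U, ((0, u) : L × ↥U) ∈ W → (u : P) ∈ W2 := by
      intro u hu
      exact Submodule.mem_map_of_mem (Submodule.mem_comap.mpr (by simpa using hu))
    have hW2E : ∀ p, p ∈ W2 → ∀ hp : p ∈ U, ((0, ⟨p, hp⟩) : L × ↥U) ∈ W := by
      intro p hpW hp
      obtain ⟨u, huW, hup⟩ := Submodule.mem_map.mp hpW
      have e : (⟨p, hp⟩ : ↥U) = u := Subtype.ext hup.symm
      rw [e]
      simpa using Submodule.mem_comap.mp huW
    have hW2D : ∀ p ∈ W2, DP p ∈ W2 := by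
      intro p hp
      obtain ⟨u, huW, rfl⟩ := Submodule.mem_map.mp hp
      have hm : ((0, DU u) : L × ↥U) ∈ W := by
        have e : ((0, DU u) : L × ↥U) = DV (0, u) := by
          refine Prod.ext ?_ rfl
          show (0 : L) = DL 0
          rw [map_zero]
        rw [e]
        exact hWD _ (by simpa using Submodule.mem_comap.mp huW)
      exact hW2I (DU u) hm
    have hbase : ∀ a' ∈ sL, ∀ b' ∈ sL, ∀ n, MP (τ a') (τ b') n ∈ W2 := by
      intro a' ha' b' hb' n
      by_cases hn : n ∈ (MP (τ a') (τ b')).support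
      · refine hW2I ⟨MP (τ a') (τ b') n, hUcoeff a' b' n⟩ ?_
        apply hWs
        refine Finset.mem_coe.mpr (Finset.mem_union_right _ (Finset.mem_biUnion.mpr
          ⟨(a', b'), Finset.mem_product.mpr ⟨ha', hb'⟩, Finset.mem_image_of_mem _ hn⟩))
      · have e : MP (τ a') (τ b') n = 0 := Finsupp.notMem_support_iff.mp hn
        rw [e]
        exact W2.zero_mem
    have stepA : ∀ b' ∈ sL, ∀ (a : L) (n : ℕ), MP (τ a) (τ b') n ∈ W2 := by
      intro b' hb'
      let A : Submodule k L :=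
        { carrier := {a : L | ∀ n, MP (τ a) (τ b') n ∈ W2}
          add_mem' := fun ha ha' n => by
            simp only [map_add, LinearMap.add_apply, Finsupp.add_apply]
            exact W2.add_mem (ha n) (ha' n)
          zero_mem' := fun n => by simp
          smul_mem' := fun t a ha n => by
            simp only [map_smul, LinearMap.smul_apply, Finsupp.smul_apply]
            exact W2.smul_mem t (ha n) }
      have hA : A = ⊤ := by
        apply hsL
        · intro a haA n
          have e : MP (τ (DL a)) (τ b') = -(lamMul k (MP (τ a) (τ b'))) := by
            rw [hτD, hP.mul_sesqui.dleft]
          rw [e, Finsupp.neg_apply]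
          refine W2.neg_mem ?_
          rcases n with _ | n
          · rw [lamMul_apply_zero]; exact W2.zero_mem
          · rw [lamMul_apply_succ]; exact haA n
        · intro a haS n
          exact hbase a haS b' hb' n
      intro a n
      have haA : a ∈ A := by rw [hA]; trivial
      exact haA n
    have stepB : ∀ (a b : L) (n : ℕ), MP (τ a) (τ b) n ∈ W2 := by
      let B : Submodule k L :=
        { carrier := {b : L | ∀ (a : L) (n : ℕ), MP (τ a) (τ b) n ∈ W2}
          add_mem' := fun hb hb' a n => by
            simp only [map_add, LinearMap.add_apply, Finsupp.add_apply]
            exact W2.add_mem (hb a n) (hb' a n)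
          zero_mem' := fun a n => by simp
          smul_mem' := fun t b hb a n => by
            simp only [map_smul, LinearMap.smul_apply, Finsupp.smul_apply]
            exact W2.smul_mem t (hb a n) }
      have hB : B = ⊤ := by
        apply hsL
        · intro b hbB a n
          have e : MP (τ a) (τ (DL b))
              = cw k DP (MP (τ a) (τ b)) + lamMul k (MP (τ a) (τ b)) := by
            rw [hτD, hP.mul_sesqui.dright]
          rw [e, Finsupp.add_apply, cw_apply]
          refine W2.add_mem (hW2D _ (hbB a n)) ?_
          rcases n with _ | n
          · rw [lamMul_apply_zero]; exact W2.zero_mem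
          · rw [lamMul_apply_succ]; exact hbB a n
        · intro b hbS a n
          exact stepA b hbS a n
      intro a b n
      have hbB : b ∈ B := by rw [hB]; trivial
      exact hbB a n
    have hgenW2 : ∀ (m : ℕ) (a b : L) (n : ℕ), (DP ^ m) (MP (τ a) (τ b) n) ∈ W2 := by
      intro m
      induction m with
      | zero =>
          intro a b n
          rw [pow_zero]
          exact stepB a b n
      | succ m ih =>
          intro a b n
          have e : (DP ^ (m + 1)) (MP (τ a) (τ b) n)
              = DP ((DP ^ m) (MP (τ a) (τ b) n)) := by
            rw [pow_succ']; rfl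
          rw [e]
          exact hW2D _ (ih a b n)
    have hUW2 : U ≤ W2 := by
      rw [hUdef]
      refine Submodule.span_le.mpr ?_
      rintro p ⟨a, b, m, n, rfl⟩
      exact hgenW2 m a b n
    have hWU : ∀ u : ↥U, ((0, u) : L × ↥U) ∈ W := by
      intro u
      exact hW2E _ (hUW2 u.2) u.2
    refine Submodule.eq_top_iff'.mpr fun v => ?_
    have hv : v = ((v.1, 0) : L × ↥U) + (0, v.2) := by
      refine Prod.ext ?_ ?_ <;> simp
    rw [hv]
    exact W.add_mem (hW1 v.1) (hWU v.2)
  · -- faithfulness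
    intro a ha0 hcontra
    obtain ⟨b, hb⟩ := hnondeg a ha0
    apply hb
    have h2 := hρsnd a (b, 0)
    rw [hcontra] at h2
    simp only [LinearMap.zero_apply, map_zero] at h2
    rw [hσdef] at h2
    simp only [map_zero, add_zero] at h2
    have h3 : lamMul k (MP (τ a) (τ b)) = lamMul k 0 := by
      rw [map_zero, ← h2]
    exact lamMul_injective (k := k) h3
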